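/- For p, q ∈ [0,1] with kl(p,q) defined as p·log(p/q) + (1−p)·log((1−p)/(1−q)) (with the conventions kl(0,q) = −log(1−q) and kl(1,q) = −log q), we have kl(p,q) ≥ 9(p−q)² / (2(p+2q)(3−p−2q)). -/

import Mathlib

open Real

/-- The Bernoulli Kullback–Leibler divergence `kl : [0,1] × [0,1] → [0,∞]`, with the
conventions `kl(0,q) = −log(1−q)`, `kl(1,q) = −log q`, and the value `∞` when a
logarithm of zero would occur. -/
noncomputable def bernKL (p q : ℝ) : EReal :=
  if p = 0 then (if q = 1 then ⊤ else ((-Real.log (1 - q) : ℝ) : EReal))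
  else if p = 1 then (if q = 0 then ⊤ else ((-Real.log q : ℝ) : EReal))
  else if q = 0 ∨ q = 1 then ⊤
  else ((p * Real.log (p / q) + (1 - p) * Real.log ((1 - p) / (1 - q)) : ℝ) : EReal)

lemma P_nonneg (p x : ℝ) (hp0 : 0 ≤ p) (hp1 : p ≤ 1) (hx0 : 0 ≤ x) (hx1 : x ≤ 1) :
    0 ≤ (3-2*p-4*x)^2 + (p+2*x)*(3-p-2*x) - (x-p)*(3-2*p-4*x) := by
  nlinarith [sq_nonneg (3-2*p-4*x), sq_nonneg (3*(3-2*p-4*x) - 2*(x-p)), sq_nonneg (x-p),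
    mul_nonneg (sub_nonneg.2 hp1) (sub_nonneg.2 hx1), mul_nonneg hp0 hx0,
    sq_nonneg (3-2*p-4*x - (x-p))]

lemma hasDeriv_F (p : ℝ) (hp0 : 0 < p) (hp1 : p < 1) (y : ℝ) (hy0 : 0 < y) (hy1 : y < 1) :
    HasDerivAt (fun x => p*(Real.log p - Real.log x) + (1-p)*(Real.log (1-p) - Real.log (1-x))
      - 9*(p-x)^2/(2*(p+2*x)*(3-p-2*x)))
      (4*(y-p)^3*((3-2*p-4*y)^2 + (p+2*y)*(3-p-2*y) - (y-p)*(3-2*p-4*y))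
        /(y*(1-y)*(2*(p+2*y)*(3-p-2*y))^2)) y := by
  have hy1' : (1:ℝ) - y ≠ 0 := by linarith
  have hd1 : (0:ℝ) < p + 2*y := by linarith
  have hd2 : (0:ℝ) < 3 - p - 2*y := by linarith
  have hden : 2*(p+2*y)*(3-p-2*y) ≠ 0 := by positivity
  have h1 : HasDerivAt (fun x : ℝ => p*(Real.log p - Real.log x)) (p * -y⁻¹) y :=
    ((Real.hasDerivAt_log hy0.ne').const_sub (Real.log p)).const_mul p
  have hlin : HasDerivAt (fun x : ℝ => 1 - x) (-1) y := (hasDerivAt_id y).const_sub 1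
  have h2 : HasDerivAt (fun x : ℝ => (1-p)*(Real.log (1-p) - Real.log (1-x)))
      ((1-p) * -(-1/(1-y))) y := ((hlin.log hy1').const_sub (Real.log (1-p))).const_mul (1-p)
  have hnum : HasDerivAt (fun x : ℝ => 9*(p-x)^2) (9*(2*(p-y)^1*(-1))) y :=
    (((hasDerivAt_id y).const_sub p).pow 2).const_mul 9
  have hden1 : HasDerivAt (fun x : ℝ => 2*(p+2*x)) (2*2) y := by
    simpa using (((hasDerivAt_id y).const_mul 2).const_add p).const_mul 2
  have hden2 : HasDerivAt (fun x : ℝ => 3-p-2*x) (-2) y := by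
    simpa using ((hasDerivAt_id y).const_mul 2).const_sub (3-p)
  have hdenm : HasDerivAt (fun x : ℝ => 2*(p+2*x)*(3-p-2*x))
      (2*2*(3-p-2*y) + 2*(p+2*y)*(-2)) y := hden1.mul hden2
  have hq : HasDerivAt (fun x : ℝ => 9*(p-x)^2/(2*(p+2*x)*(3-p-2*x)))
      ((9*(2*(p-y)^1*(-1)) * (2*(p+2*y)*(3-p-2*y)) - 9*(p-y)^2 * (2*2*(3-p-2*y) + 2*(p+2*y)*(-2)))
        / (2*(p+2*y)*(3-p-2*y))^2) y := hnum.div hdenm hden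
  have := (h1.add h2).sub hq
  refine this.congr_deriv ?_
  have hn1 : p + y*2 ≠ 0 := by linarith
  have hn2 : 3 - p - y*2 ≠ 0 := by linarith
  field_simp
  ring

lemma main_ineq (p : ℝ) (hp0 : 0 < p) (hp1 : p < 1) (x : ℝ) (hx0 : 0 < x) (hx1 : x < 1) :
    9*(p-x)^2/(2*(p+2*x)*(3-p-2*x))
      ≤ p*(Real.log p - Real.log x) + (1-p)*(Real.log (1-p) - Real.log (1-x)) := by
  set F : ℝ → ℝ := fun x => p*(Real.log p - Real.log x) + (1-p)*(Real.log (1-p) - Real.log (1-x))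
      - 9*(p-x)^2/(2*(p+2*x)*(3-p-2*x)) with hF
  have hFp : F p = 0 := by simp [hF]
  have key : 0 ≤ F x := by
    rcases le_or_gt x p with hxp | hpx
    · have hanti : AntitoneOn F (Set.Ioc 0 p) := by
        apply antitoneOn_of_deriv_nonpos (convex_Ioc 0 p)
        · intro y hy
          exact (hasDeriv_F p hp0 hp1 y hy.1
            (lt_of_le_of_lt hy.2 hp1)).continuousAt.continuousWithinAt
        · intro y hy
          rw [interior_Ioc] at hy
          exact (hasDeriv_F p hp0 hp1 y hy.1
            (hy.2.trans hp1)).differentiableAt.differentiableWithinAt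
        · intro y hy
          rw [interior_Ioc] at hy
          have hy1 : y < 1 := hy.2.trans hp1
          rw [(hasDeriv_F p hp0 hp1 y hy.1 hy1).deriv]
          apply div_nonpos_of_nonpos_of_nonneg
          · have h3 : (y-p)^3 ≤ 0 :=
              Odd.pow_nonpos ⟨1, by norm_num⟩ (by linarith [hy.2])
            have hP := P_nonneg p y hp0.le hp1.le hy.1.le hy1.le
            nlinarith [mul_nonneg (neg_nonneg.2 h3) hP]
          · exact mul_nonneg (mul_nonneg hy.1.le (by linarith)) (sq_nonneg _)
      have := hanti ⟨hx0, hxp⟩ ⟨hp0, le_refl p⟩ hxp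
      rw [hFp] at this
      linarith
    · have hmono : MonotoneOn F (Set.Ico p 1) := by
        apply monotoneOn_of_deriv_nonneg (convex_Ico p 1)
        · intro y hy
          exact (hasDeriv_F p hp0 hp1 y (hp0.trans_le hy.1)
            hy.2).continuousAt.continuousWithinAt
        · intro y hy
          rw [interior_Ico] at hy
          exact (hasDeriv_F p hp0 hp1 y (hp0.trans hy.1)
            hy.2).differentiableAt.differentiableWithinAt
        · intro y hy
          rw [interior_Ico] at hy
          have hy0 : 0 < y := hp0.trans hy.1
          rw [(hasDeriv_F p hp0 hp1 y hy0 hy.2).deriv]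
          apply div_nonneg
          · have h3 : (0:ℝ) ≤ (y-p)^3 := pow_nonneg (by linarith [hy.1]) 3
            have hP := P_nonneg p y hp0.le hp1.le hy0.le hy.2.le
            nlinarith [mul_nonneg h3 hP]
          · exact mul_nonneg (mul_nonneg hy0.le (by linarith [hy.2])) (sq_nonneg _)
      have := hmono ⟨le_refl p, hp1⟩ ⟨hpx.le, hx1⟩ hpx.le
      rw [hFp] at this
      linarith
  simp only [hF, sub_nonneg] at key
  exact key

lemma p0_ineq (x : ℝ) (hx0 : 0 < x) (hx1 : x < 1) :
    9*x/(4*(3-2*x)) ≤ -Real.log (1-x) := by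
  set F : ℝ → ℝ := fun x => -Real.log (1-x) - 9*x/(4*(3-2*x)) with hF
  have hder : ∀ y ∈ Set.Ico (0:ℝ) 1, HasDerivAt F
      ((4*(16*y^2 - 21*y + 9))/((1-y)*(4*(3-2*y))^2)) y := by
    intro y hy
    have h1 : (1:ℝ) - y ≠ 0 := by linarith [hy.2]
    have h2 : (4:ℝ)*(3-2*y) ≠ 0 := by nlinarith [hy.2]
    have hlog : HasDerivAt (fun x : ℝ => -Real.log (1-x)) (-(-1/(1-y))) y :=
      ((((hasDerivAt_id y).const_sub 1).log h1)).neg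
    have hq : HasDerivAt (fun x : ℝ => 9*x/(4*(3-2*x)))
        ((9*(4*(3-2*y)) - 9*y*(4*(-2)))/(4*(3-2*y))^2) y := by
      have hn : HasDerivAt (fun x : ℝ => 9*x) 9 y := by
        simpa using (hasDerivAt_id y).const_mul 9
      have hd : HasDerivAt (fun x : ℝ => 4*(3-2*x)) (4*(-2)) y := by
        simpa using (((hasDerivAt_id y).const_mul 2).const_sub 3).const_mul 4
      exact hn.div hd h2
    have := hlog.sub hq
    refine this.congr_deriv ?_
    have hn : (3:ℝ) - y*2 ≠ 0 := by linarith [hy.2]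
    field_simp
    ring
  have hmono : MonotoneOn F (Set.Ico 0 1) := by
    apply monotoneOn_of_deriv_nonneg (convex_Ico 0 1)
    · intro y hy
      exact (hder y hy).continuousAt.continuousWithinAt
    · intro y hy
      rw [interior_Ico] at hy
      exact (hder y ⟨hy.1.le, hy.2⟩).differentiableAt.differentiableWithinAt
    · intro y hy
      rw [interior_Ico] at hy
      rw [(hder y ⟨hy.1.le, hy.2⟩).deriv]
      apply div_nonneg
      · nlinarith [sq_nonneg (32*y - 21)]
      · have h1 : (0:ℝ) ≤ 1 - y := by linarith [hy.2]
        positivity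
  have h0 : F 0 = 0 := by simp [hF]
  have := hmono ⟨le_refl 0, one_pos⟩ ⟨hx0.le, hx1⟩ hx0.le
  rw [h0] at this
  simp only [hF, sub_nonneg] at this ⊢
  linarith [this]

lemma p1_ineq (x : ℝ) (hx0 : 0 < x) (hx1 : x < 1) :
    9*(1-x)/(4*(1+2*x)) ≤ -Real.log x := by
  set F : ℝ → ℝ := fun x => -Real.log x - 9*(1-x)/(4*(1+2*x)) with hF
  have hder : ∀ y ∈ Set.Ioc (0:ℝ) 1, HasDerivAt F
      (-(4*(16*y^2 - 11*y + 4))/(y*(4*(1+2*y))^2)) y := by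
    intro y hy
    have hy0 := hy.1
    have h2 : (4:ℝ)*(1+2*y) ≠ 0 := by nlinarith [hy.1]
    have hlog : HasDerivAt (fun x : ℝ => -Real.log x) (-y⁻¹) y :=
      (Real.hasDerivAt_log hy0.ne').neg
    have hq : HasDerivAt (fun x : ℝ => 9*(1-x)/(4*(1+2*x)))
        ((9*(-1)*(4*(1+2*y)) - 9*(1-y)*(4*2))/(4*(1+2*y))^2) y := by
      have hn : HasDerivAt (fun x : ℝ => 9*(1-x)) (9*(-1)) y :=
        ((hasDerivAt_id y).const_sub 1).const_mul 9
      have hd : HasDerivAt (fun x : ℝ => 4*(1+2*x)) (4*2) y := by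
        simpa using (((hasDerivAt_id y).const_mul 2).const_add 1).const_mul 4
      exact hn.div hd h2
    have := hlog.sub hq
    refine this.congr_deriv ?_
    have hn : (1:ℝ) + y*2 ≠ 0 := by linarith [hy.1]
    field_simp
    ring
  have hanti : AntitoneOn F (Set.Ioc 0 1) := by
    apply antitoneOn_of_deriv_nonpos (convex_Ioc 0 1)
    · intro y hy
      exact (hder y hy).continuousAt.continuousWithinAt
    · intro y hy
      rw [interior_Ioc] at hy
      exact (hder y ⟨hy.1, hy.2.le⟩).differentiableAt.differentiableWithinAt
    · intro y hy
      rw [interior_Ioc] at hy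
      rw [(hder y ⟨hy.1, hy.2.le⟩).deriv]
      apply div_nonpos_of_nonpos_of_nonneg
      · nlinarith [sq_nonneg (32*y - 11)]
      · have h1 : (0:ℝ) < y := hy.1
        positivity
  have h1 : F 1 = 0 := by norm_num [hF]
  have := hanti ⟨hx0, hx1.le⟩ ⟨one_pos, le_refl 1⟩ hx1.le
  rw [h1] at this
  simp only [hF, sub_nonneg] at this ⊢
  linarith [this]

/-- For `p, q ∈ [0,1]`, `kl(p,q) ≥ 9(p−q)² / (2(p+2q)(3−p−2q))`. -/
theorem bernKL_lower_bound (p q : ℝ) (hp : p ∈ Set.Icc (0:ℝ) 1) (hq : q ∈ Set.Icc (0:ℝ) 1) :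
    ((9 * (p - q) ^ 2 / (2 * (p + 2 * q) * (3 - p - 2 * q)) : ℝ) : EReal) ≤ bernKL p q := by
  obtain ⟨hp0, hp1⟩ := hp
  obtain ⟨hq0, hq1⟩ := hq
  rcases eq_or_lt_of_le hq0 with hq0' | hq0'
  · -- q = 0
    rcases eq_or_lt_of_le hp0 with hp0' | hp0'
    · -- p = 0, q = 0
      rw [← hp0', ← hq0']
      simp [bernKL]
    · -- p > 0, q = 0 : bernKL = ⊤
      have : bernKL p 0 = ⊤ := by
        rcases eq_or_lt_of_le hp1 with hp1' | hp1'
        · simp [bernKL, hp1'.symm, hp0'.ne']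
        · simp [bernKL, hp0'.ne', hp1'.ne]
      rw [← hq0', this]
      exact le_top
  rcases eq_or_lt_of_le hq1 with hq1' | hq1'
  · -- q = 1
    rcases eq_or_lt_of_le hp1 with hp1' | hp1'
    · rw [hp1', hq1']
      simp [bernKL]
    · have : bernKL p 1 = ⊤ := by
        rcases eq_or_lt_of_le hp0 with hp0' | hp0'
        · simp [bernKL, ← hp0']
        · simp [bernKL, hp0'.ne', hp1'.ne]
      rw [hq1', this]
      exact le_top
  -- now 0 < q < 1
  rcases eq_or_lt_of_le hp0 with hp0' | hp0'
  · -- p = 0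
    rw [← hp0']
    have hb : bernKL 0 q = ((-Real.log (1-q) : ℝ) : EReal) := by
      simp [bernKL, hq1'.ne]
    rw [hb, EReal.coe_le_coe_iff]
    have heq : 9 * ((0:ℝ) - q) ^ 2 / (2 * (0 + 2 * q) * (3 - 0 - 2 * q)) = 9*q/(4*(3-2*q)) := by
      have h1 : (3:ℝ) - 2*q ≠ 0 := by linarith
      field_simp
      ring
    rw [heq]
    exact p0_ineq q hq0' hq1'
  rcases eq_or_lt_of_le hp1 with hp1' | hp1'
  · -- p = 1
    rw [hp1']
    have hb : bernKL 1 q = ((-Real.log q : ℝ) : EReal) := by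
      simp [bernKL, hq0'.ne']
    rw [hb, EReal.coe_le_coe_iff]
    have heq : 9 * ((1:ℝ) - q) ^ 2 / (2 * (1 + 2 * q) * (3 - 1 - 2 * q))
        = 9*(1-q)/(4*(1+2*q)) := by
      have h1 : (1:ℝ) + 2*q ≠ 0 := by linarith
      rcases eq_or_lt_of_le hq1 with h | h
      · rw [← h]; norm_num
      · have h2 : (3:ℝ) - 1 - 2*q ≠ 0 := by linarith
        have h3 : (3:ℝ) - 1 - q*2 ≠ 0 := by linarith
        field_simp
        ring
    rw [heq]
    exact p1_ineq q hq0' hq1'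
  -- 0 < p < 1
  have hb : bernKL p q
      = ((p * Real.log (p / q) + (1 - p) * Real.log ((1 - p) / (1 - q)) : ℝ) : EReal) := by
    simp [bernKL, hp0'.ne', hp1'.ne, hq0'.ne', hq1'.ne]
  rw [hb, EReal.coe_le_coe_iff]
  rw [Real.log_div hp0'.ne' hq0'.ne', Real.log_div (by linarith : (1:ℝ)-p ≠ 0)
    (by linarith : (1:ℝ)-q ≠ 0)]
  have := main_ineq p hp0' hp1' q hq0' hq1'
  have hpq : (p - q)^2 = (p - q)^2 := rfl
  calc 9 * (p - q) ^ 2 / (2 * (p + 2 * q) * (3 - p - 2 * q))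
      = 9*(p-q)^2/(2*(p+2*q)*(3-p-2*q)) := by ring_nf
    _ ≤ _ := this
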